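/- arXiv:2511.12698 — 3 statements merged into one kernel-verified Lean document; each statement's English description precedes it below -/
import Mathlib

section
/- Under the hold-out evaluation setup with symmetrically distributed, homoskedastic errors (σ_j² = σ² for all j), the variance of the centered hold-out loss equals (4σ²/m) times its expectation: Var(L) = (4σ²/m) · E[L]. (This is the variance-curve formula V(m) = 4σ² E_L(m)/m used to determine the optimal hold-out size.) -/
open MeasureTheory ProbabilityTheory

lemma variance_add_const' {Ω : Type*} [MeasurableSpace Ω] {P : Measure Ω}
    [IsProbabilityMeasure P] {X : Ω → ℝ} (hX : MemLp X 2 P) (c : ℝ) :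
    variance (fun ω => X ω + c) P = variance X P := by
  have hXc : MemLp (fun ω => X ω + c) 2 P := hX.add (memLp_const c)
  have hI : ∫ ω, (X ω + c) ∂P = (∫ ω, X ω ∂P) + c := by
    rw [integral_add (hX.integrable one_le_two) (integrable_const c)]
    simp
  rw [variance_eq_integral hXc.aemeasurable, variance_eq_integral hX.aemeasurable]
  congr 1
  funext ω
  simp only [Pi.pow_apply, Pi.sub_apply, hI]
  ring

/-- Variance-curve formula: under symmetric homoskedastic errors,
`Var(L) = (4σ²/m) · E[L]`. -/
theorem holdout_variance_curve
    {Ω : Type*} [MeasurableSpace Ω] {P : Measure Ω} [IsProbabilityMeasure P]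
    (m : ℕ) (hm : 0 < m) (a : Fin m → ℝ) (ε : Fin m → Ω → ℝ) (σ : ℝ)
    (hmeas : ∀ j, Measurable (ε j))
    (hindep : iIndepFun ε P)
    (hL2 : ∀ j, MemLp (ε j) 2 P)
    (hmean : ∀ j, ∫ ω, ε j ω ∂P = 0)
    (hvar : ∀ j, ∫ ω, (ε j ω) ^ 2 ∂P = σ ^ 2)
    (hsymm : ∀ j, Measure.map (ε j) P = Measure.map (fun ω => -(ε j ω)) P) :
    variance (fun ω => (1 / m : ℝ) * ∑ j, ((a j - ε j ω) ^ 2 - (ε j ω) ^ 2)) P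
      = (4 * σ ^ 2 / m) *
        ∫ ω, (1 / m : ℝ) * ∑ j, ((a j - ε j ω) ^ 2 - (ε j ω) ^ 2) ∂P := by
  have hm' : (m : ℝ) ≠ 0 := Nat.cast_ne_zero.mpr hm.ne'
  set Y : Fin m → Ω → ℝ := fun j ω => (-(2 * a j / m)) * ε j ω with hY
  set c : ℝ := (1 / m : ℝ) * ∑ j, (a j) ^ 2 with hc
  have hfun : (fun ω => (1 / m : ℝ) * ∑ j, ((a j - ε j ω) ^ 2 - (ε j ω) ^ 2))
      = fun ω => (∑ j, Y j ω) + c := by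
    funext ω
    rw [hc, Finset.mul_sum, Finset.mul_sum, ← Finset.sum_add_distrib]
    apply Finset.sum_congr rfl
    intro j _
    simp only [hY]
    ring
  have hYL2 : ∀ j, MemLp (Y j) 2 P := fun j => (hL2 j).const_mul _
  have hYint : ∀ j, ∫ ω, Y j ω ∂P = 0 := by
    intro j
    simp only [hY, integral_const_mul, hmean j, mul_zero]
  -- expectation of L
  have hE : ∫ ω, (∑ j, Y j) ω + c ∂P = c := by
    simp only [Finset.sum_apply]
    rw [integral_add (integrable_finset_sum _ fun j _ => (hYL2 j).integrable one_le_two)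
      (integrable_const c)]
    rw [integral_finset_sum _ fun j _ => (hYL2 j).integrable one_le_two]
    simp [hYint]
  -- variance of L
  have hVsum : variance (∑ j, Y j) P = ∑ j, variance (Y j) P :=
    IndepFun.variance_sum (μ := P) (X := Y) (s := Finset.univ)
      (fun j _ => hYL2 j)
      (fun i _ j _ hij =>
        (hindep.indepFun hij).comp (measurable_const_mul _) (measurable_const_mul _))
  have hVj : ∀ j, variance (Y j) P = (2 * a j / m) ^ 2 * σ ^ 2 := by
    intro j
    have : variance (ε j) P = σ ^ 2 := by
      rw [variance_of_integral_eq_zero (hL2 j).aemeasurable (hmean j)]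
      simpa using hvar j
    rw [hY]
    rw [variance_const_mul]
    rw [this]
    ring
  rw [hfun, show (fun ω => (∑ j, Y j ω) + c) = (fun ω => (∑ j, Y j) ω + c) from by
    funext ω; simp, variance_add_const' (memLp_finset_sum' _ fun j _ => hYL2 j), hVsum, hE]
  rw [hc, Finset.mul_sum, Finset.mul_sum]
  apply Finset.sum_congr rfl
  intro j _
  rw [hVj j]
  field_simp
  ring
end

section
/- Under the hold-out evaluation setup (no symmetry assumption) with homoskedastic errors σ_j² = σ² for all j, the variance of the centered hold-out loss is bounded by sixteen times σ²/m times its expectation: Var(L) ≤ (16σ²/m) · E[L]. -/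
open MeasureTheory ProbabilityTheory

lemma aux_variance_const_add {Ω : Type*} [MeasurableSpace Ω] {μ : Measure Ω}
    [IsProbabilityMeasure μ] (c : ℝ) {X : Ω → ℝ} (hX : MemLp X 2 μ) :
    variance (fun ω => c + X ω) μ = variance X μ := by
  have h1 : MemLp (fun ω => c + X ω) 2 μ := (memLp_const c).add hX
  have hint : μ[fun ω => c + X ω] = c + μ[X] := by
    rw [integral_add (integrable_const c) (hX.integrable one_le_two)]
    simp
  rw [variance_eq_integral h1.aemeasurable, variance_eq_integral hX.aemeasurable, hint]
  congr 1
  funext ω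
  ring

/-- Theorem 2, homoskedastic case: `Var(L) ≤ (16σ²/m) · E[L]`. -/
theorem holdout_variance_curve_general
    {Ω : Type*} [MeasurableSpace Ω] {P : Measure Ω} [IsProbabilityMeasure P]
    (m : ℕ) (hm : 0 < m) (a : Fin m → ℝ) (ε : Fin m → Ω → ℝ) (σ : ℝ)
    (hmeas : ∀ j, Measurable (ε j))
    (hindep : iIndepFun ε P)
    (hL2 : ∀ j, MemLp (ε j) 2 P)
    (hmean : ∀ j, ∫ ω, ε j ω ∂P = 0)
    (hvar : ∀ j, ∫ ω, (ε j ω) ^ 2 ∂P = σ ^ 2) :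
    variance (fun ω => (1 / m : ℝ) * ∑ j, ((a j - ε j ω) ^ 2 - (ε j ω) ^ 2)) P
      ≤ (16 * σ ^ 2 / m) *
        ∫ ω, (1 / m : ℝ) * ∑ j, ((a j - ε j ω) ^ 2 - (ε j ω) ^ 2) ∂P := by
  set X : Fin m → Ω → ℝ := fun j ω => (a j) ^ 2 + (-2 * a j) * ε j ω with hX
  have hXeq : ∀ j ω, (a j - ε j ω) ^ 2 - (ε j ω) ^ 2 = X j ω := by
    intro j ω; simp only [hX]; ring
  have hXL2 : ∀ j, MemLp (X j) 2 P := fun j =>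
    (memLp_const (a j ^ 2)).add ((hL2 j).const_mul (-2 * a j))
  -- variance of each X j
  have hvarε : ∀ j, variance (ε j) P = σ ^ 2 := by
    intro j
    rw [variance_eq_sub (hL2 j)]
    have : P[(ε j) ^ 2] = σ ^ 2 := by
      rw [← hvar j]; rfl
    rw [this, hmean j]
    ring
  have hvarX : ∀ j, variance (X j) P = 4 * (a j) ^ 2 * σ ^ 2 := by
    intro j
    rw [hX]
    rw [aux_variance_const_add _ ((hL2 j).const_mul _), variance_const_mul, hvarε j]
    ring
  -- independence of X i, X j
  have hXindep : Set.Pairwise ↑(Finset.univ : Finset (Fin m))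
      fun i j => IndepFun (X i) (X j) P := by
    intro i _ j _ hij
    exact (hindep.indepFun hij).comp
      (measurable_const.add (measurable_const.mul measurable_id))
      (measurable_const.add (measurable_const.mul measurable_id))
  -- mean of X j
  have hintX : ∀ j, ∫ ω, X j ω ∂P = (a j) ^ 2 := by
    intro j
    rw [hX]
    rw [integral_add (integrable_const _)
      (((hL2 j).integrable one_le_two).const_mul _)]
    rw [integral_const_mul, hmean j]
    simp
  have hintegrableX : ∀ j, Integrable (X j) P := fun j => (hXL2 j).integrable one_le_two
  -- compute expectation of L
  have hEL : ∫ ω, (1 / m : ℝ) * ∑ j, ((a j - ε j ω) ^ 2 - (ε j ω) ^ 2) ∂P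
      = (1 / m : ℝ) * ∑ j, (a j) ^ 2 := by
    simp_rw [hXeq]
    rw [integral_const_mul, integral_finset_sum _ (fun j _ => hintegrableX j)]
    simp_rw [hintX]
  -- compute the variance of L
  have hVL : variance (fun ω => (1 / m : ℝ) * ∑ j, ((a j - ε j ω) ^ 2 - (ε j ω) ^ 2)) P
      = (1 / m : ℝ) ^ 2 * ∑ j, (4 * (a j) ^ 2 * σ ^ 2) := by
    simp_rw [hXeq]
    rw [variance_const_mul]
    congr 1
    have : (fun ω => ∑ j, X j ω) = ∑ j, X j := by
      funext ω; simp
    rw [this, IndepFun.variance_sum (fun j _ => hXL2 j) hXindep]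
    simp_rw [hvarX]
  rw [hEL, hVL]
  have hS : (0 : ℝ) ≤ ∑ j, (a j) ^ 2 := Finset.sum_nonneg fun j _ => sq_nonneg _
  have hσ : (0 : ℝ) ≤ σ ^ 2 := sq_nonneg _
  have hsum : ∑ j, (4 * (a j) ^ 2 * σ ^ 2) = 4 * σ ^ 2 * ∑ j, (a j) ^ 2 := by
    rw [Finset.mul_sum]
    exact Finset.sum_congr rfl fun j _ => by ring
  rw [hsum]
  calc (1 / m : ℝ) ^ 2 * (4 * σ ^ 2 * ∑ j, (a j) ^ 2)
      ≤ (1 / m : ℝ) ^ 2 * (16 * σ ^ 2 * ∑ j, (a j) ^ 2) := by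
        apply mul_le_mul_of_nonneg_left ?_ (sq_nonneg _)
        nlinarith
    _ = 16 * σ ^ 2 / m * ((1 / m : ℝ) * ∑ j, (a j) ^ 2) := by ring
end

section
/- (Stein's identity used to derive SURE.) Let N ≥ 1, let ε_1, …, ε_N be i.i.d. Gaussian N(0, σ²) random variables, write Y = μ + ε for a fixed μ ∈ ℝ^N, and let μ̂ : ℝ^N → ℝ^N be continuously differentiable with E[|ε_i μ̂_i(Y)|] < ∞ and E[|(∂μ̂_i/∂y_i)(Y)|] < ∞ for each i. Then E[εᵀ μ̂(Y)] = σ² E[Σ_{i=1}^N (∂μ̂_i/∂y_i)(Y)]. -/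
open MeasureTheory ProbabilityTheory
open scoped NNReal
open Real Filter Set
open scoped ENNReal Topology

-- pdf derivative
lemma hasDerivAt_gaussianPDFReal_aux (m : ℝ) (v : ℝ≥0) (hv : 0 < v) (x : ℝ) :
    HasDerivAt (gaussianPDFReal m v) (-((x - m) / v) * gaussianPDFReal m v x) x := by
  have hv' : (v : ℝ) ≠ 0 := by positivity
  have hu : HasDerivAt (fun x : ℝ => -(x - m) ^ 2 / (2 * v)) (-((x - m) / v)) x := by
    have h1 : HasDerivAt (fun x : ℝ => (x - m) ^ 2) (2 * (x - m)) x := by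
      simpa using ((hasDerivAt_id x).sub_const m).fun_pow 2
    have := (h1.fun_neg).div_const (2 * (v : ℝ))
    refine this.congr_deriv ?_
    rw [neg_div]
    ring
  have := (hu.exp).const_mul (√(2 * π * v))⁻¹
  rw [gaussianPDFReal_def]
  simpa [gaussianPDFReal, mul_comm, mul_left_comm, mul_assoc] using this

lemma limit_zero_of_integrable_mul_atTop {h : ℝ → ℝ} {m L : ℝ}
    (hint : Integrable (fun x => (x - m) * h x) volume)
    (hL : Tendsto h atTop (𝓝 L)) : L = 0 := by
  by_contra hL0
  have h1 : Tendsto (fun x => |x - m| * |h x|) atTop atTop := by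
    refine Tendsto.atTop_mul_pos (abs_pos.mpr hL0) ?_ (hL.abs)
    exact tendsto_abs_atTop_atTop.comp (tendsto_atTop_add_const_right _ (-m) tendsto_id)
  have h2 : ∀ᶠ x in atTop, (1 : ℝ) ≤ |(x - m) * h x| := by
    filter_upwards [h1.eventually_ge_atTop 1] with x hx
    simpa [abs_mul] using hx
  obtain ⟨A, hA⟩ := h2.exists_forall_of_atTop
  have hconst : Integrable (fun _ : ℝ => (1 : ℝ)) (volume.restrict (Ici A)) := by
    refine Integrable.mono (hint.restrict (s := Ici A)).norm aestronglyMeasurable_const ?_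
    refine (ae_restrict_iff' measurableSet_Ici).mpr (ae_of_all _ fun x hx => ?_)
    simpa [abs_mul] using hA x hx
  rw [integrable_const_iff] at hconst
  simp [isFiniteMeasure_restrict, Real.volume_Ici] at hconst

lemma limit_zero_of_integrable_mul_atBot {h : ℝ → ℝ} {m L : ℝ}
    (hint : Integrable (fun x => (x - m) * h x) volume)
    (hL : Tendsto h atBot (𝓝 L)) : L = 0 := by
  by_contra hL0
  have h1 : Tendsto (fun x => |x - m| * |h x|) atBot atTop := by
    refine Tendsto.atTop_mul_pos (abs_pos.mpr hL0) ?_ (hL.abs)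
    have : Tendsto (fun x : ℝ => x - m) atBot atBot :=
      tendsto_atBot_add_const_right _ (-m) tendsto_id
    exact tendsto_abs_atBot_atTop.comp this
  have h2 : ∀ᶠ x in atBot, (1 : ℝ) ≤ |(x - m) * h x| := by
    filter_upwards [h1.eventually_ge_atTop 1] with x hx
    simpa [abs_mul] using hx
  obtain ⟨A, hA⟩ := h2.exists_forall_of_atBot
  have hconst : Integrable (fun _ : ℝ => (1 : ℝ)) (volume.restrict (Iic A)) := by
    refine Integrable.mono (hint.restrict (s := Iic A)).norm aestronglyMeasurable_const ?_
    refine (ae_restrict_iff' measurableSet_Iic).mpr (ae_of_all _ fun x hx => ?_)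
    simpa [abs_mul] using hA x hx
  rw [integrable_const_iff] at hconst
  simp [isFiniteMeasure_restrict, Real.volume_Iic] at hconst

lemma stein_one_dim (m : ℝ) (v : ℝ≥0) (hv : 0 < v) (g : ℝ → ℝ) (hg : ContDiff ℝ 1 g)
    (h1 : Integrable (fun x => (x - m) * g x) (gaussianReal m v))
    (h2 : Integrable (deriv g) (gaussianReal m v)) :
    ∫ x, (x - m) * g x ∂(gaussianReal m v) = v * ∫ x, deriv g x ∂(gaussianReal m v) := by
  have hv' : (v : ℝ) ≠ 0 := by positivity
  set φ : ℝ → ℝ := gaussianPDFReal m v with hφ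
  have hφ0 : ∀ x, 0 ≤ φ x := gaussianPDFReal_nonneg m v
  set w : ℝ → ℝ≥0 := fun x => Real.toNNReal (φ x) with hw
  have hwm : Measurable w := (measurable_gaussianPDFReal m v).real_toNNReal
  have hwc : ∀ x, (w x : ℝ) = φ x := fun x => Real.coe_toNNReal _ (hφ0 x)
  have hgr : gaussianReal m v = volume.withDensity (fun x => ((w x : ℝ≥0) : ℝ≥0∞)) := by
    rw [gaussianReal_of_var_ne_zero _ hv.ne']
    congr 1
  have hφc : Continuous φ := by
    rw [hφ, gaussianPDFReal_def]
    fun_prop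
  -- transfer integrability to volume
  have c1 : Integrable (fun x => (x - m) * g x * φ x) volume := by
    have := (integrable_withDensity_iff_integrable_smul hwm).mp (hgr ▸ h1)
    refine this.congr (ae_of_all _ fun x => ?_)
    simp [NNReal.smul_def, hwc x]; ring
  have c2 : Integrable (fun x => deriv g x * φ x) volume := by
    have := (integrable_withDensity_iff_integrable_smul hwm).mp (hgr ▸ h2)
    refine this.congr (ae_of_all _ fun x => ?_)
    simp [NNReal.smul_def, hwc x]; ring
  -- the product h and its derivative
  set h : ℝ → ℝ := fun x => g x * φ x with hh
  set h' : ℝ → ℝ := fun x => deriv g x * φ x - (1 / v) * ((x - m) * g x * φ x) with hh'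
  have hd : ∀ x, HasDerivAt h (h' x) x := by
    intro x
    have hgx : HasDerivAt g (deriv g x) x :=
      ((hg.differentiable one_ne_zero) x).hasDerivAt
    have := hgx.fun_mul (hasDerivAt_gaussianPDFReal_aux m v hv x)
    refine this.congr_deriv ?_
    rw [hh']
    field_simp
    ring
  have hc : Continuous h' := by
    have hdc : Continuous (deriv g) := hg.continuous_deriv le_rfl
    have hgc : Continuous g := hg.continuous
    rw [hh']
    fun_prop
  have hint' : Integrable h' volume := c2.sub (c1.const_mul (1 / v))
  -- limits of h at ±∞ are zero
  have hmulint : Integrable (fun x => (x - m) * h x) volume := by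
    refine c1.congr (ae_of_all _ fun x => ?_)
    rw [hh]; ring
  have key : ∀ x, h x = h m + ∫ t in m..x, h' t := by
    intro x
    rw [intervalIntegral.integral_eq_sub_of_hasDerivAt (fun t _ => hd t)
      (hc.intervalIntegrable m x)]
    ring
  have htop : Tendsto h atTop (𝓝 (h m + ∫ t in Ioi m, h' t)) := by
    have := intervalIntegral_tendsto_integral_Ioi m hint'.integrableOn tendsto_id
    exact (tendsto_const_nhds.add this).congr fun x => (key x).symm
  have hbot : Tendsto h atBot (𝓝 (h m - ∫ t in Iic m, h' t)) := by
    have := intervalIntegral_tendsto_integral_Iic m hint'.integrableOn tendsto_id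
    have h2 : Tendsto (fun x => h m - ∫ t in x..m, h' t) atBot
        (𝓝 (h m - ∫ t in Iic m, h' t)) := tendsto_const_nhds.sub this
    refine h2.congr fun x => ?_
    rw [key x, intervalIntegral.integral_symm m x]
    ring
  have htop0 : h m + ∫ t in Ioi m, h' t = 0 := limit_zero_of_integrable_mul_atTop hmulint htop
  have hbot0 : h m - ∫ t in Iic m, h' t = 0 := limit_zero_of_integrable_mul_atBot hmulint hbot
  have htotal : ∫ x, h' x = 0 := by
    rw [← intervalIntegral.integral_Iic_add_Ioi (b := m) hint'.integrableOn hint'.integrableOn]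
    linarith
  have hsplit : ∫ x, h' x = (∫ x, deriv g x * φ x) - (1 / v) * ∫ x, (x - m) * g x * φ x := by
    rw [hh', integral_sub c2 (c1.const_mul _), integral_const_mul]
  -- express gaussian integrals as volume integrals
  have e1 : ∫ x, (x - m) * g x ∂(gaussianReal m v) = ∫ x, (x - m) * g x * φ x := by
    rw [hgr, integral_withDensity_eq_integral_smul hwm]
    refine integral_congr_ae (ae_of_all _ fun x => ?_)
    simp [NNReal.smul_def, hwc x]; ring
  have e2 : ∫ x, deriv g x ∂(gaussianReal m v) = ∫ x, deriv g x * φ x := by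
    rw [hgr, integral_withDensity_eq_integral_smul hwm]
    refine integral_congr_ae (ae_of_all _ fun x => ?_)
    simp [NNReal.smul_def, hwc x]; ring
  rw [e1, e2]
  have : (∫ x, deriv g x * φ x) - (1 / v) * ∫ x, (x - m) * g x * φ x = 0 := by
    rw [← hsplit, htotal]
  field_simp at this
  linarith

set_option maxHeartbeats 1000000 in
lemma stein_coord (N : ℕ) (hN : 0 < N) (μ : Fin N → ℝ) (v : ℝ≥0) (hv : 0 < v)
    (f : (Fin N → ℝ) → (Fin N → ℝ)) (hf : ContDiff ℝ 1 f) (i : Fin N)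
    (h1 : Integrable (fun y => (y i - μ i) * f y i)
      (Measure.pi fun j => gaussianReal (μ j) v))
    (h2 : Integrable (fun y => fderiv ℝ f y (Pi.single i 1) i)
      (Measure.pi fun j => gaussianReal (μ j) v)) :
    ∫ y, (y i - μ i) * f y i ∂(Measure.pi fun j => gaussianReal (μ j) v)
      = v * ∫ y, fderiv ℝ f y (Pi.single i 1) i
          ∂(Measure.pi fun j => gaussianReal (μ j) v) := by
  obtain ⟨n, rfl⟩ : ∃ n, N = n + 1 := ⟨N - 1, by omega⟩
  set Pm : Measure (Fin (n + 1) → ℝ) := Measure.pi fun j => gaussianReal (μ j) v with hPm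
  set gs : Measure ℝ := gaussianReal (μ i) v with hgs
  set νr : Measure (Fin n → ℝ) :=
    Measure.pi fun j => gaussianReal (μ (i.succAbove j)) v with hνr
  set e := MeasurableEquiv.piFinSuccAbove (fun _ : Fin (n + 1) => ℝ) i with he
  have hmp : MeasurePreserving e Pm (gs.prod νr) :=
    measurePreserving_piFinSuccAbove (fun j => gaussianReal (μ j) v) i
  set Y : (Fin n → ℝ) → ℝ → (Fin (n + 1) → ℝ) := fun b t => i.insertNth t b with hY
  have hYe : ∀ t b, e.symm (t, b) = Y b t := fun t b => rfl
  have hYi : ∀ b t, Y b t i = t := by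
    intro b t
    simp only [hY]
    exact Fin.insertNth_apply_same (α := fun _ => ℝ) i t b
  have hYaffine : ∀ b t, Y b t = Y b 0 + t • (Pi.single i 1 : Fin (n + 1) → ℝ) := by
    intro b t
    funext j
    refine Fin.succAboveCases i ?_ (fun k => ?_) j
    · simp [hY, Fin.insertNth_apply_same, Pi.single_eq_same]
    · simp [hY, Fin.insertNth_apply_succAbove,
        Pi.single_eq_of_ne (Fin.succAbove_ne i k)]
  have hgd : ∀ b, ContDiff ℝ 1 (fun t => f (Y b t) i) := by
    intro b
    have hcurve : ContDiff ℝ 1 (Y b) := by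
      have hYb : (Y b) = fun t => Y b 0 + t • (Pi.single i 1 : Fin (n + 1) → ℝ) :=
        funext (hYaffine b)
      rw [hYb]
      exact contDiff_const.add (contDiff_id.smul contDiff_const)
    have hproj : ContDiff ℝ 1 (fun y : Fin (n + 1) → ℝ => y i) :=
      (ContinuousLinearMap.proj i : (Fin (n + 1) → ℝ) →L[ℝ] ℝ).contDiff
    exact hproj.comp (hf.comp hcurve)
  have hgderiv : ∀ b t, deriv (fun s => f (Y b s) i) t
      = fderiv ℝ f (Y b t) (Pi.single i 1) i := by
    intro b t
    have hcurve : HasDerivAt (Y b) (Pi.single i 1 : Fin (n + 1) → ℝ) t := by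
      have h0 : HasDerivAt (fun s : ℝ => Y b 0 + s • (Pi.single i 1 : Fin (n + 1) → ℝ))
          ((1 : ℝ) • (Pi.single i 1 : Fin (n + 1) → ℝ)) t :=
        ((hasDerivAt_id t).smul_const _).const_add _
      rw [one_smul] at h0
      have hYb : (Y b) = fun s => Y b 0 + s • (Pi.single i 1 : Fin (n + 1) → ℝ) :=
        funext (hYaffine b)
      rw [hYb]
      exact h0
    have hF := (hf.differentiable one_ne_zero (Y b t)).hasFDerivAt
    have hcomp := hF.comp_hasDerivAt t hcurve
    exact (hasDerivAt_pi.1 hcomp i).deriv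
  -- generic transfer of integrals over Pm to iterated integrals
  have transfer : ∀ F : (Fin (n + 1) → ℝ) → ℝ, Integrable F Pm →
      (∫ y, F y ∂Pm = ∫ b, ∫ t, F (Y b t) ∂gs ∂νr) ∧
      (∀ᵐ b ∂νr, Integrable (fun t => F (Y b t)) gs) := by
    intro F hF
    have hFz : Integrable (fun z : ℝ × (Fin n → ℝ) => F (e.symm z)) (gs.prod νr) := by
      refine ((hmp.integrable_comp_emb e.measurableEmbedding).symm.mpr ?_)
      have hco : ((fun z : ℝ × (Fin n → ℝ) => F (e.symm z)) ∘ ⇑e) = F := by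
        funext x
        simp
      rw [hco]
      exact hF
    have hsect : ∀ᵐ b ∂νr, Integrable (fun t => F (e.symm (t, b))) gs := hFz.prod_left_ae
    constructor
    · calc ∫ y, F y ∂Pm = ∫ z, F (e.symm z) ∂(gs.prod νr) := by
            rw [← hmp.integral_comp e.measurableEmbedding (fun z => F (e.symm z))]
            simp
        _ = ∫ b, ∫ t, F (e.symm (t, b)) ∂gs ∂νr := integral_prod_symm _ hFz
        _ = ∫ b, ∫ t, F (Y b t) ∂gs ∂νr := by
            refine integral_congr_ae (Filter.Eventually.of_forall fun b => ?_)
            dsimp only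
            refine integral_congr_ae (Filter.Eventually.of_forall fun t => ?_)
            show F (e.symm (t, b)) = F (Y b t)
            rw [hYe]
    · filter_upwards [hsect] with b hb
      refine hb.congr (Filter.Eventually.of_forall fun t => ?_)
      show F (e.symm (t, b)) = F (Y b t)
      rw [hYe]
  obtain ⟨hEq1, hae1⟩ := transfer (fun y => (y i - μ i) * f y i) h1
  obtain ⟨hEq2, hae2⟩ := transfer (fun y => fderiv ℝ f y (Pi.single i 1) i) h2
  rw [hEq1, hEq2, ← integral_const_mul]
  refine integral_congr_ae ?_
  filter_upwards [hae1, hae2] with b hb1 hb2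
  have hb1' : Integrable (fun t => (t - μ i) * f (Y b t) i) gs :=
    hb1.congr (Filter.Eventually.of_forall fun t => by simp only [hYi])
  have hb2' : Integrable (deriv (fun s => f (Y b s) i)) gs :=
    hb2.congr (Filter.Eventually.of_forall fun t => (hgderiv b t).symm)
  have hst := stein_one_dim (μ i) v hv (fun s => f (Y b s) i) (hgd b) hb1' hb2'
  calc ∫ t, (Y b t i - μ i) * f (Y b t) i ∂gs
      = ∫ t, (t - μ i) * f (Y b t) i ∂gs := by
        refine integral_congr_ae (Filter.Eventually.of_forall fun t => ?_)
        simp only [hYi]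
    _ = v * ∫ t, deriv (fun s => f (Y b s) i) t ∂gs := hst
    _ = v * ∫ t, fderiv ℝ f (Y b t) (Pi.single i 1) i ∂gs := by
        rw [integral_congr_ae (Filter.Eventually.of_forall fun t => hgderiv b t)]



/-- Stein's identity: for `Y ~ ∏ N(μ_i, σ²)` and a continuously differentiable
estimator `μ̂`, `E[εᵀ μ̂(Y)] = σ² E[∑_i ∂μ̂_i/∂y_i (Y)]`, where `ε = Y - μ`. -/
theorem stein_identity
    (N : ℕ) (hN : 0 < N) (μ : Fin N → ℝ) (v : ℝ≥0) (hv : 0 < v)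
    (f : (Fin N → ℝ) → (Fin N → ℝ)) (hf : ContDiff ℝ 1 f)
    (hint1 : ∀ i, Integrable (fun y => (y i - μ i) * f y i)
      (Measure.pi fun i => gaussianReal (μ i) v))
    (hint2 : ∀ i, Integrable (fun y => fderiv ℝ f y (Pi.single i 1) i)
      (Measure.pi fun i => gaussianReal (μ i) v)) :
    ∫ y, ∑ i, (y i - μ i) * f y i ∂(Measure.pi fun i => gaussianReal (μ i) v)
      = (v : ℝ) *
        ∫ y, ∑ i, fderiv ℝ f y (Pi.single i 1) i
          ∂(Measure.pi fun i => gaussianReal (μ i) v) := by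
  rw [integral_finset_sum Finset.univ (fun i _ => hint1 i),
    integral_finset_sum Finset.univ (fun i _ => hint2 i), Finset.mul_sum]
  exact Finset.sum_congr rfl fun i _ => stein_coord N hN μ v hv f hf i (hint1 i) (hint2 i)
end
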